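/- Let G be a finite graph with orientation ε, and let A, B be finite abelian groups of orders p, q, with Ω = T(G,ε;A) × F(G,ε;B). Then Whitney's rank generating polynomial satisfies R(G;p,q) = ∑ 2^{|ker f − supp g|}, summed over all tension-flows (f,g) ∈ Ω with supp g ⊆ ker f, where ker f = {e : f(e)=0} and supp g = {e : g(e)≠0}. -/

import Mathlib

set_option linter.unusedSectionVars false
set_option linter.unusedVariables false
set_option maxHeartbeats 1000000
open Finset Classical


/-- `f : E → A` is a tension of the digraph `tl, hd : E → V`: it is the
coboundary of a potential `p : V → A`. -/
def IsTension {V E A : Type} [AddCommGroup A] (tl hd : E → V) (f : E → A) : Prop :=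
  ∃ p : V → A, ∀ e, f e = p (tl e) - p (hd e)

/-- `g : E → B` is a flow of the digraph `tl, hd : E → V`: conservation holds
at every vertex. -/
def IsFlow {V E B : Type} [Fintype E] [DecidableEq V] [AddCommGroup B]
    (tl hd : E → V) (g : E → B) : Prop :=
  ∀ v : V, ∑ e ∈ Finset.univ.filter (fun e => tl e = v), g e
         = ∑ e ∈ Finset.univ.filter (fun e => hd e = v), g e

/-- The rank `r⟨X⟩ = |V| - c⟨X⟩` of the spanning subgraph `(V, X)`, where
`c⟨X⟩` is its number of connected components. -/
noncomputable def grank {V E : Type} [Fintype V] (tl hd : E → V) (X : Finset E) : ℕ :=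
  Fintype.card V -
    Nat.card (Quot (fun a b : V =>
      ∃ e ∈ X, (tl e = a ∧ hd e = b) ∨ (tl e = b ∧ hd e = a)))

lemma pow_cancel {p a b N : ℕ} (hp : 0 < p) (h : p ^ a = N * p ^ b) :
    N = p ^ (a - b) := by
  rcases Nat.lt_or_ge p 2 with h2 | h2
  · have : p = 1 := by omega
    subst this; simpa using h.symm
  · have hN : N ≠ 0 := by
      rintro rfl
      have := pow_pos hp a
      omega
    have hba : b ≤ a := by
      have h1 : p ^ b ≤ p ^ a := by
        rw [h]; exact Nat.le_mul_of_pos_left _ (Nat.pos_of_ne_zero hN)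
      exact (Nat.pow_le_pow_iff_right h2).1 h1
    have := Nat.sub_add_cancel hba
    rw [← this, pow_add] at h
    exact (Nat.eq_of_mul_eq_mul_right (pow_pos hp b) h.symm)



namespace TF


variable {V E : Type} [Fintype V] [Fintype E] [DecidableEq V] [DecidableEq E]

def rel (tl hd : E → V) (X : Finset E) : V → V → Prop := fun a b =>
  ∃ e ∈ X, (tl e = a ∧ hd e = b) ∨ (tl e = b ∧ hd e = a)

variable (tl hd : E → V)

abbrev Q (X : Finset E) := Quot (rel tl hd X)
abbrev pk (X : Finset E) : V → Q tl hd X := Quot.mk _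

instance (X : Finset E) : Finite (Q tl hd X) :=
  Finite.of_surjective (pk tl hd X) Quot.exists_rep

lemma pk_edge {X : Finset E} {e : E} (he : e ∈ X) :
    pk tl hd X (tl e) = pk tl hd X (hd e) :=
  Quot.sound ⟨e, he, Or.inl ⟨rfl, rfl⟩⟩

lemma mk_mono {X Y : Finset E} (hXY : X ⊆ Y) {a b : V}
    (h : pk tl hd X a = pk tl hd X b) : pk tl hd Y a = pk tl hd Y b :=
  Quot.eqvGen_sound ((Quot.eqvGen_exact h).mono
    (fun a b ⟨e, he, h'⟩ => ⟨e, hXY he, h'⟩))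

lemma mk_empty_inj {a b : V} (h : pk tl hd ∅ a = pk tl hd ∅ b) : a = b := by
  have h' := Quot.eqvGen_exact h
  clear h
  induction h' with
  | rel a b hab => obtain ⟨e, he, _⟩ := hab; exact absurd he (Finset.notMem_empty e)
  | refl => rfl
  | symm _ _ _ ih => exact ih.symm
  | trans _ _ _ _ _ ih1 ih2 => exact ih1.trans ih2

lemma mk_insert_iff (e0 : E) (s : Finset E) (u v : V) :
    pk tl hd (insert e0 s) u = pk tl hd (insert e0 s) v ↔
      pk tl hd s u = pk tl hd s v ∨
      (pk tl hd s u = pk tl hd s (tl e0) ∧ pk tl hd s v = pk tl hd s (hd e0)) ∨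
      (pk tl hd s u = pk tl hd s (hd e0) ∧ pk tl hd s v = pk tl hd s (tl e0)) := by
  constructor
  · intro h
    have h' := Quot.eqvGen_exact h
    clear h
    induction h' with
    | rel a b hab =>
      obtain ⟨e, he, hh⟩ := hab
      rcases Finset.mem_insert.1 he with rfl | he
      · rcases hh with ⟨ha, hb⟩ | ⟨ha, hb⟩
        · subst ha; subst hb; exact Or.inr (Or.inl ⟨rfl, rfl⟩)
        · subst ha; subst hb; exact Or.inr (Or.inr ⟨rfl, rfl⟩)
      · exact Or.inl (Quot.sound ⟨e, he, hh⟩)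
    | refl => exact Or.inl rfl
    | symm a b _ ih =>
      rcases ih with h1 | ⟨h1, h2⟩ | ⟨h1, h2⟩
      · exact Or.inl h1.symm
      · exact Or.inr (Or.inr ⟨h2, h1⟩)
      · exact Or.inr (Or.inl ⟨h2, h1⟩)
    | trans a b c _ _ ih1 ih2 =>
      rcases ih1 with h1 | ⟨h1, h2⟩ | ⟨h1, h2⟩ <;>
        rcases ih2 with h3 | ⟨h3, h4⟩ | ⟨h3, h4⟩
      · exact Or.inl (h1.trans h3)
      · exact Or.inr (Or.inl ⟨h1.trans h3, h4⟩)
      · exact Or.inr (Or.inr ⟨h1.trans h3, h4⟩)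
      · exact Or.inr (Or.inl ⟨h1, h3.symm.trans h2⟩)
      · exact Or.inr (Or.inl ⟨h1, h4⟩)
      · exact Or.inl (h1.trans h4.symm)
      · exact Or.inr (Or.inr ⟨h1, h3.symm.trans h2⟩)
      · exact Or.inl (h1.trans h4.symm)
      · exact Or.inl ((h1.trans (h3.symm.trans h2)).trans h4.symm)
  · rintro (h1 | ⟨h1, h2⟩ | ⟨h1, h2⟩)
    · exact mk_mono tl hd (Finset.subset_insert e0 s) h1
    · calc pk tl hd (insert e0 s) u
          = pk tl hd (insert e0 s) (tl e0) := mk_mono tl hd (Finset.subset_insert e0 s) h1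
        _ = pk tl hd (insert e0 s) (hd e0) := pk_edge tl hd (Finset.mem_insert_self e0 s)
        _ = pk tl hd (insert e0 s) v := (mk_mono tl hd (Finset.subset_insert e0 s) h2).symm
    · calc pk tl hd (insert e0 s) u
          = pk tl hd (insert e0 s) (hd e0) := mk_mono tl hd (Finset.subset_insert e0 s) h1
        _ = pk tl hd (insert e0 s) (tl e0) := (pk_edge tl hd (Finset.mem_insert_self e0 s)).symm
        _ = pk tl hd (insert e0 s) v := (mk_mono tl hd (Finset.subset_insert e0 s) h2).symm

section Flow
variable {B : Type} [AddCommGroup B] [Fintype B]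

noncomputable def bdry : (E → B) →+ (V → B) :=
  AddMonoidHom.mk' (fun g v => ∑ e : E,
      ((if tl e = v then g e else 0) - (if hd e = v then g e else 0))) (by
    intro g h; funext v
    simp only [Pi.add_apply]
    rw [← Finset.sum_add_distrib]
    refine Finset.sum_congr rfl fun e _ => ?_
    by_cases h1 : tl e = v <;> by_cases h2 : hd e = v <;> simp [h1, h2] <;> abel)

lemma bdry_apply (g : E → B) (v : V) :
    bdry tl hd g v = ∑ e : E,
      ((if tl e = v then g e else 0) - (if hd e = v then g e else 0)) := rfl

open Classical in
lemma isFlow_iff (g : E → B) : IsFlow tl hd g ↔ bdry tl hd g = 0 := by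
  constructor
  · intro hf
    funext v
    rw [bdry_apply, Finset.sum_sub_distrib]
    rw [← Finset.sum_filter, ← Finset.sum_filter]
    rw [hf v]
    simp
  · intro h v
    have := congrFun h v
    rw [bdry_apply, Finset.sum_sub_distrib, ← Finset.sum_filter, ← Finset.sum_filter] at this
    simpa [sub_eq_zero] using this

/-- fiber of the component map -/
noncomputable def fib (X : Finset E) (v0 : V) : Finset V :=
  univ.filter (fun u => pk tl hd X u = pk tl hd X v0)

lemma mem_fib {X : Finset E} {v0 u : V} :
    u ∈ fib tl hd X v0 ↔ pk tl hd X u = pk tl hd X v0 := by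
  simp [fib]

lemma bdry_single (e0 : E) (b : B) :
    bdry tl hd (Pi.single e0 b) = fun v =>
      (if tl e0 = v then b else 0) - (if hd e0 = v then b else 0) := by
  funext v
  rw [bdry_apply]
  rw [Finset.sum_eq_single_of_mem e0 (mem_univ e0)]
  · rw [Pi.single_eq_same]
  · intro e _ hne
    rw [Pi.single_eq_of_ne hne]
    simp

lemma sum_fib_single (X : Finset E) (v0 : V) (a : V) (b : B) :
    ∑ v ∈ fib tl hd X v0, (if a = v then b else 0)
      = if pk tl hd X a = pk tl hd X v0 then b else 0 := by
  rw [Finset.sum_ite_eq]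
  by_cases h : pk tl hd X a = pk tl hd X v0 <;> simp [mem_fib, h]

/-- Key surjectivity: any function summing to zero on each component of `X`
is the boundary of a flow supported on `X`. -/
lemma bdry_surj (X : Finset E) (h : V → B)
    (hh : ∀ v0 : V, ∑ v ∈ fib tl hd X v0, h v = 0) :
    ∃ g : E → B, (∀ e ∉ X, g e = 0) ∧ bdry tl hd g = h := by
  induction X using Finset.induction_on generalizing h with
  | empty =>
    refine ⟨0, fun _ _ => rfl, ?_⟩
    rw [map_zero]
    funext v
    have hv := hh v
    have : fib tl hd ∅ v = {v} := by
      ext u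
      simp only [mem_fib, Finset.mem_singleton]
      exact ⟨fun hu => mk_empty_inj tl hd hu, fun hu => hu ▸ rfl⟩
    rw [this, Finset.sum_singleton] at hv
    exact hv.symm
  | insert e0 s he0s ih =>
    by_cases hc : pk tl hd s (tl e0) = pk tl hd s (hd e0)
    · -- new edge joins already-connected vertices: fibers unchanged
      have hfib : ∀ v0, fib tl hd (insert e0 s) v0 = fib tl hd s v0 := by
        intro v0
        ext u
        simp only [mem_fib]
        rw [mk_insert_iff]
        constructor
        · rintro (h1 | ⟨h1, h2⟩ | ⟨h1, h2⟩)
          · exact h1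
          · exact (h1.trans hc).trans h2.symm
          · exact (h1.trans hc.symm).trans h2.symm
        · exact fun h1 => Or.inl h1
      obtain ⟨g, hsupp, hg⟩ := ih h (fun v0 => by rw [← hfib v0]; exact hh v0)
      exact ⟨g, fun e he => hsupp e (fun h' => he (Finset.mem_insert_of_mem h')), hg⟩
    · set s0 := ∑ v ∈ fib tl hd s (tl e0), h v with hs0
      set g0 : E → B := Pi.single e0 s0 with hg0
      set h' : V → B := h - bdry tl hd g0 with hh'
      have hfib2 : ∀ v0, pk tl hd s (hd e0) = pk tl hd s v0 →
          fib tl hd (insert e0 s) v0 = fib tl hd s v0 ∪ fib tl hd s (tl e0) := by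
        intro v0 h2
        ext u
        simp only [mem_fib, Finset.mem_union]
        rw [mk_insert_iff]
        constructor
        · rintro (h1 | ⟨ha, hb⟩ | ⟨ha, hb⟩)
          · exact Or.inl h1
          · exact Or.inr ha
          · exact Or.inl (ha.trans h2)
        · rintro (h1 | h1)
          · exact Or.inl h1
          · exact Or.inr (Or.inl ⟨h1, h2.symm⟩)
      have hfib3 : ∀ v0, pk tl hd s (tl e0) ≠ pk tl hd s v0 →
          pk tl hd s (hd e0) ≠ pk tl hd s v0 →
          fib tl hd (insert e0 s) v0 = fib tl hd s v0 := by
        intro v0 h1 h2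
        ext u
        simp only [mem_fib]
        rw [mk_insert_iff]
        constructor
        · rintro (ha | ⟨ha, hb⟩ | ⟨ha, hb⟩)
          · exact ha
          · exact absurd hb.symm h2
          · exact absurd hb.symm h1
        · exact fun ha => Or.inl ha
      have hbd : ∀ v0, ∑ v ∈ fib tl hd s v0, bdry tl hd g0 v
          = (if pk tl hd s (tl e0) = pk tl hd s v0 then s0 else 0)
            - (if pk tl hd s (hd e0) = pk tl hd s v0 then s0 else 0) := by
        intro v0
        rw [bdry_single]
        rw [Finset.sum_sub_distrib, sum_fib_single, sum_fib_single]
      have hh'' : ∀ v0 : V, ∑ v ∈ fib tl hd s v0, h' v = 0 := by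
        intro v0
        rw [hh']
        simp only [Pi.sub_apply]
        rw [Finset.sum_sub_distrib, hbd v0]
        by_cases h1 : pk tl hd s (tl e0) = pk tl hd s v0
        · have hfe : fib tl hd s v0 = fib tl hd s (tl e0) := by
            ext u
            simp only [mem_fib]
            rw [h1]
          have h2 : pk tl hd s (hd e0) ≠ pk tl hd s v0 := fun h2 => hc (h1.trans h2.symm)
          rw [hfe, ← hs0, if_pos h1, if_neg h2]
          simp
        · by_cases h2 : pk tl hd s (hd e0) = pk tl hd s v0
          · have hu := hh v0
            rw [hfib2 v0 h2] at hu
            have hdisj : Disjoint (fib tl hd s v0) (fib tl hd s (tl e0)) := by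
              rw [Finset.disjoint_left]
              intro u hu1 hu2
              rw [mem_fib] at hu1 hu2
              exact h1 (hu2.symm.trans hu1)
            rw [Finset.sum_union hdisj, ← hs0] at hu
            rw [if_neg h1, if_pos h2]
            rw [eq_neg_of_add_eq_zero_left hu]
            simp
          · have hu := hh v0
            rw [hfib3 v0 h1 h2] at hu
            rw [if_neg h1, if_neg h2, hu]
            simp
      obtain ⟨g', hsupp', hg'⟩ := ih h' hh''
      refine ⟨g' + g0, ?_, ?_⟩
      · intro e he
        have he1 : e ≠ e0 := fun h => he (h ▸ Finset.mem_insert_self e0 s)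
        have he2 : e ∉ s := fun h => he (Finset.mem_insert_of_mem h)
        simp [hsupp' e he2, hg0, Pi.single_eq_of_ne he1]
      · rw [map_add, hg', hh']
        funext v
        simp

def GX (X : Finset E) : AddSubgroup (E → B) where
  carrier := {g | ∀ e ∉ X, g e = 0}
  add_mem' := by intro g h hg hh e he; simp [hg e he, hh e he]
  zero_mem' := by intro e he; rfl
  neg_mem' := by intro g hg e he; simp [hg e he]

noncomputable def GXequiv (X : Finset E) :
    (GX (E := E) X : AddSubgroup (E → B)) ≃ (↥X → B) where
  toFun g x := g.1 x.1
  invFun u := ⟨fun e => if h : e ∈ X then u ⟨e, h⟩ else 0, fun e he => dif_neg he⟩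
  left_inv g := by
    apply Subtype.ext
    funext e
    dsimp only
    by_cases he : e ∈ X
    · exact dif_pos he
    · rw [dif_neg he, g.2 e he]
  right_inv u := by
    funext x
    simp

lemma card_GX (X : Finset E) :
    Nat.card (GX (E := E) X (B := B)) = Fintype.card B ^ X.card := by
  rw [Nat.card_congr (GXequiv (E := E) X), Nat.card_fun, Nat.card_eq_fintype_card,
    Nat.card_eq_fintype_card, Fintype.card_coe]

noncomputable def sigmaX (X : Finset E) : (V → B) →+ (Q tl hd X → B) :=
  AddMonoidHom.mk' (fun h c => ∑ v ∈ univ.filter (fun v => pk tl hd X v = c), h v) (by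
    intro a b
    funext c
    simp [Finset.sum_add_distrib])

lemma sigmaX_apply (X : Finset E) (h : V → B) (c : Q tl hd X) :
    sigmaX tl hd X h = fun c => ∑ v ∈ univ.filter (fun v => pk tl hd X v = c), h v := rfl

lemma sigmaX_surj (X : Finset E) :
    Function.Surjective (sigmaX tl hd X (B := B)) := by
  intro u
  set w : Q tl hd X → V := fun c => (Quot.exists_rep c).choose with hwdef
  have hw : ∀ c, pk tl hd X (w c) = c := fun c => (Quot.exists_rep c).choose_spec
  refine ⟨fun v => if v = w (pk tl hd X v) then u (pk tl hd X v) else 0, ?_⟩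
  funext c
  show ∑ v ∈ univ.filter (fun v => pk tl hd X v = c),
      (if v = w (pk tl hd X v) then u (pk tl hd X v) else 0) = u c
  rw [Finset.sum_congr rfl (fun v hv => by
    rw [(Finset.mem_filter.1 hv).2])]
  rw [Finset.sum_ite_eq']
  rw [if_pos (by simp [hw c])]

lemma card_ker_sigmaX (X : Finset E) :
    Nat.card ((sigmaX tl hd X (B := B)).ker)
      = Fintype.card B ^ (Fintype.card V - Nat.card (Q tl hd X)) := by
  have h1 : Nat.card (V → B)
      = Nat.card (Q tl hd X → B) * Nat.card (sigmaX tl hd X (B := B)).ker := by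
    rw [AddSubgroup.card_eq_card_quotient_mul_card_addSubgroup (sigmaX tl hd X (B := B)).ker,
      Nat.card_congr (QuotientAddGroup.quotientKerEquivOfSurjective _
        (sigmaX_surj tl hd X)).toEquiv]
  rw [Nat.card_fun, Nat.card_fun, Nat.card_eq_fintype_card, Nat.card_eq_fintype_card] at h1
  exact pow_cancel Fintype.card_pos (by rw [h1, mul_comm])

lemma range_eq_ker (X : Finset E) :
    ((bdry tl hd (B := B)).comp (GX (E := E) X).subtype).range = (sigmaX tl hd X).ker := by
  ext h
  constructor
  · rintro ⟨⟨g, hg⟩, rfl⟩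
    rw [AddMonoidHom.mem_ker]
    funext c
    show ∑ v ∈ univ.filter (fun v => pk tl hd X v = c), bdry tl hd g v = 0
    simp only [bdry_apply]
    rw [Finset.sum_comm]
    refine Finset.sum_eq_zero fun e _ => ?_
    rw [Finset.sum_sub_distrib]
    have hsum : ∀ a : V, ∑ v ∈ univ.filter (fun v => pk tl hd X v = c),
        (if a = v then g e else 0) = if pk tl hd X a = c then g e else 0 := by
      intro a
      rw [Finset.sum_ite_eq]
      by_cases hh : pk tl hd X a = c <;> simp [hh]
    rw [hsum, hsum]
    by_cases he : e ∈ X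
    · rw [pk_edge tl hd he, sub_self]
    · rw [hg e he]
      simp
  · intro hker
    have hz : ∀ v0 : V, ∑ v ∈ fib tl hd X v0, h v = 0 := by
      intro v0
      exact congrFun (AddMonoidHom.mem_ker.1 hker) (pk tl hd X v0)
    obtain ⟨g, hsupp, hg⟩ := bdry_surj tl hd X h hz
    exact ⟨⟨g, hsupp⟩, hg⟩

lemma flow_card (X : Finset E) :
    (univ.filter (fun g : E → B => IsFlow tl hd g ∧ ∀ e ∉ X, g e = 0)).card
      = Fintype.card B ^ (X.card - grank tl hd X) := by
  set DX := (bdry tl hd (B := B)).comp (GX (E := E) X).subtype with hDX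
  have hfirst : Nat.card (GX (E := E) X (B := B))
      = Nat.card DX.range * Nat.card DX.ker := by
    rw [AddSubgroup.card_eq_card_quotient_mul_card_addSubgroup DX.ker,
      Nat.card_congr (QuotientAddGroup.quotientKerEquivRange DX).toEquiv]
  rw [card_GX, hDX, range_eq_ker, card_ker_sigmaX] at hfirst
  have hker : Nat.card DX.ker
      = Fintype.card B ^ (X.card - (Fintype.card V - Nat.card (Q tl hd X))) := by
    refine pow_cancel Fintype.card_pos ?_
    rw [hfirst, mul_comm, hDX]
  have kerequiv : (DX.ker : AddSubgroup (GX (E := E) X (B := B)))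
      ≃ {g : E → B // IsFlow tl hd g ∧ ∀ e ∉ X, g e = 0} :=
    { toFun := fun x => ⟨x.1.1, (isFlow_iff tl hd _).2 (AddMonoidHom.mem_ker.1 x.2), x.1.2⟩
      invFun := fun y => ⟨⟨y.1, y.2.2⟩, AddMonoidHom.mem_ker.2 ((isFlow_iff tl hd _).1 y.2.1)⟩
      left_inv := fun x => Subtype.ext (Subtype.ext rfl)
      right_inv := fun y => Subtype.ext rfl }
  have hfc : (univ.filter (fun g : E → B => IsFlow tl hd g ∧ ∀ e ∉ X, g e = 0)).card
      = Nat.card DX.ker := by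
    rw [← Fintype.card_subtype, ← Nat.card_eq_fintype_card]
    exact (Nat.card_congr kerequiv).symm
  rw [hfc, hker]
  rfl

end Flow

lemma cardQ_le (X : Finset E) : Nat.card (Q tl hd X) ≤ Fintype.card V := by
  have : Nat.card V = Fintype.card V := Nat.card_eq_fintype_card
  rw [← this]
  exact Nat.card_le_card_of_surjective (pk tl hd X) Quot.exists_rep

lemma cardQ_mono {X Y : Finset E} (hXY : X ⊆ Y) :
    Nat.card (Q tl hd Y) ≤ Nat.card (Q tl hd X) := by
  refine Nat.card_le_card_of_surjective
    (Quot.lift (pk tl hd Y) (fun a b h => Quot.sound ⟨h.choose,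
      hXY h.choose_spec.1, h.choose_spec.2⟩)) ?_
  intro c
  obtain ⟨v, rfl⟩ := Quot.exists_rep c
  exact ⟨pk tl hd X v, rfl⟩

section Tension
variable {A : Type} [AddCommGroup A] [Fintype A]

noncomputable def tdel : (V → A) →+ (E → A) :=
  AddMonoidHom.mk' (fun p e => p (tl e) - p (hd e)) (by
    intro p q; funext e; simp only [Pi.add_apply]; abel)

lemma tdel_apply (p : V → A) (e : E) : tdel tl hd p e = p (tl e) - p (hd e) := rfl

def SX (X : Finset E) : AddSubgroup (V → A) where
  carrier := {p | ∀ e ∈ X, p (tl e) = p (hd e)}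
  add_mem' := by intro p q hp hq e he; simp [hp e he, hq e he]
  zero_mem' := by intro e he; rfl
  neg_mem' := by intro p hp e he; simp [hp e he]

lemma mem_SX {X : Finset E} {p : V → A} :
    p ∈ SX tl hd X ↔ ∀ e ∈ X, p (tl e) = p (hd e) := Iff.rfl

noncomputable def SXequiv (X : Finset E) : (SX tl hd X : AddSubgroup (V → A)) ≃ (Q tl hd X → A) where
  toFun p := Quot.lift p.1 (by
    rintro a b ⟨e, he, ⟨rfl, rfl⟩ | ⟨rfl, rfl⟩⟩
    · exact p.2 e he
    · exact (p.2 e he).symm)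
  invFun u := ⟨fun v => u (pk tl hd X v),
    fun e he => congrArg u (pk_edge tl hd he)⟩
  left_inv p := Subtype.ext rfl
  right_inv u := by
    funext c
    obtain ⟨v, rfl⟩ := Quot.exists_rep c
    rfl

lemma card_SX (X : Finset E) :
    Nat.card (SX tl hd X (A := A)) = Fintype.card A ^ Nat.card (Q tl hd X) := by
  rw [Nat.card_congr (SXequiv tl hd X), Nat.card_fun, Nat.card_eq_fintype_card]

open Classical in
lemma tension_card (X : Finset E) :
    (univ.filter (fun f : E → A => IsTension tl hd f ∧ ∀ e ∈ X, f e = 0)).card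
      = Fintype.card A ^ (grank tl hd univ - grank tl hd X) := by
  set δX := (tdel tl hd (A := A)).comp (SX tl hd X).subtype with hδX
  -- kernel
  have kerequiv : (δX.ker : AddSubgroup (SX tl hd X (A := A))) ≃ (SX tl hd univ (A := A)) :=
    { toFun := fun x => ⟨x.1.1, fun e _ =>
        sub_eq_zero.1 (congrFun (AddMonoidHom.mem_ker.1 x.2) e)⟩
      invFun := fun y => ⟨⟨y.1, fun e _ => y.2 e (mem_univ e)⟩,
        AddMonoidHom.mem_ker.2 (funext fun e => sub_eq_zero.2 (y.2 e (mem_univ e)))⟩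
      left_inv := fun x => Subtype.ext (Subtype.ext rfl)
      right_inv := fun y => Subtype.ext rfl }
  -- range
  have hrange : ((δX.range : AddSubgroup (E → A)) : Set (E → A))
      = {f : E → A | IsTension tl hd f ∧ ∀ e ∈ X, f e = 0} := by
    ext f
    constructor
    · rintro ⟨⟨p, hp⟩, rfl⟩
      refine ⟨⟨p, fun e => rfl⟩, fun e he => sub_eq_zero.2 (hp e he)⟩
    · rintro ⟨⟨p, hp⟩, hzero⟩
      refine ⟨⟨p, fun e he => sub_eq_zero.1 ?_⟩, ?_⟩
      · rw [← hp e]; exact hzero e he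
      · funext e; exact (hp e).symm
  have hfirst : Nat.card (SX tl hd X (A := A))
      = Nat.card δX.range * Nat.card δX.ker := by
    rw [AddSubgroup.card_eq_card_quotient_mul_card_addSubgroup δX.ker,
      Nat.card_congr (QuotientAddGroup.quotientKerEquivRange δX).toEquiv]
  rw [card_SX, Nat.card_congr kerequiv, card_SX] at hfirst
  have hN : Nat.card δX.range
      = Fintype.card A ^ (Nat.card (Q tl hd X) - Nat.card (Q tl hd (univ : Finset E))) :=
    pow_cancel Fintype.card_pos hfirst
  have hfc : (univ.filter (fun f : E → A => IsTension tl hd f ∧ ∀ e ∈ X, f e = 0)).card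
      = Nat.card δX.range := by
    rw [← Fintype.card_subtype, ← Nat.card_eq_fintype_card]
    exact Nat.card_congr (Equiv.setCongr hrange).symm
  rw [hfc, hN]
  have e1 : grank tl hd (univ : Finset E)
      = Fintype.card V - Nat.card (Q tl hd (univ : Finset E)) := rfl
  have e2 : grank tl hd X = Fintype.card V - Nat.card (Q tl hd X) := rfl
  rw [e1, e2]
  have h1 := cardQ_le tl hd X
  have h2 := cardQ_mono tl hd (Finset.subset_univ X)
  set x1 := Nat.card (Q tl hd X) with hx1
  set x2 := Nat.card (Q tl hd (univ : Finset E)) with hx2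
  set n := Fintype.card V with hn
  clear_value x1 x2 n
  have : x1 - x2 = n - x2 - (n - x1) := by
    clear hfirst hN hfc hrange kerequiv e1 e2
    omega
  rw [this]

end Tension
end TF

open Finset TF in
open Classical in
/-- Whitney's rank generating polynomial evaluated at the orders `p, q` of
finite abelian groups `A, B` satisfies
`R(G;p,q) = ∑ 2^{|ker f - supp g|}`, summed over all tension-flows `(f,g)`
with `supp g ⊆ ker f`. -/
theorem stmt9 {V E A B : Type} [Fintype V] [Fintype E] [DecidableEq V] [DecidableEq E]
    [AddCommGroup A] [Fintype A] [AddCommGroup B] [Fintype B]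
    (tl hd : E → V) (p q : ℕ) (hp : Fintype.card A = p) (hq : Fintype.card B = q) :
    ∑ X : Finset E, p ^ (grank tl hd Finset.univ - grank tl hd X) *
        q ^ (X.card - grank tl hd X)
    = ∑ fg ∈ Finset.univ.filter (fun fg : (E → A) × (E → B) =>
          IsTension tl hd fg.1 ∧ IsFlow tl hd fg.2 ∧
          ∀ e : E, fg.2 e ≠ 0 → fg.1 e = 0),
        2 ^ ((Finset.univ.filter (fun e => fg.1 e = 0)) \
              (Finset.univ.filter (fun e => fg.2 e ≠ 0))).card := by
  classical
  subst hp
  subst hq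
  symm
  have step1 : ∀ fg ∈ Finset.univ.filter (fun fg : (E → A) × (E → B) =>
          IsTension tl hd fg.1 ∧ IsFlow tl hd fg.2 ∧
          ∀ e : E, fg.2 e ≠ 0 → fg.1 e = 0),
      2 ^ ((Finset.univ.filter (fun e => fg.1 e = 0)) \
            (Finset.univ.filter (fun e => fg.2 e ≠ 0))).card
      = ∑ X : Finset E,
          (if (∀ e ∈ X, fg.1 e = 0) ∧ (∀ e ∉ X, fg.2 e = 0) then 1 else 0) := by
    intro fg hfg
    rw [Finset.mem_filter] at hfg
    obtain ⟨-, hT, hF, hsupp⟩ := hfg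
    set S := Finset.univ.filter (fun e => fg.2 e ≠ 0) with hS
    set K := Finset.univ.filter (fun e => fg.1 e = 0) with hK
    have hsub : S ⊆ K := by
      intro e he
      rw [hS, Finset.mem_filter] at he
      rw [hK, Finset.mem_filter]
      exact ⟨Finset.mem_univ e, hsupp e he.2⟩
    have h1 : (K \ S).card = K.card - S.card := Finset.card_sdiff_of_subset hsub
    rw [h1, ← Finset.card_Icc_finset hsub]
    have h2 : ∀ X : Finset E, X ∈ Finset.Icc S K ↔
        ((∀ e ∈ X, fg.1 e = 0) ∧ (∀ e ∉ X, fg.2 e = 0)) := by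
      intro X
      rw [Finset.mem_Icc]
      constructor
      · rintro ⟨h3, h4⟩
        refine ⟨fun e he => (Finset.mem_filter.1 (h4 he)).2, fun e he => ?_⟩
        by_contra h5
        exact he (h3 (by rw [hS]; exact Finset.mem_filter.2 ⟨Finset.mem_univ e, h5⟩))
      · rintro ⟨h3, h4⟩
        constructor
        · intro e he
          rw [hS, Finset.mem_filter] at he
          by_contra h5
          exact he.2 (h4 e h5)
        · intro e he
          rw [hK, Finset.mem_filter]
          exact ⟨Finset.mem_univ e, h3 e he⟩
    have h3 : ∑ X : Finset E, (if X ∈ Finset.Icc S K then 1 else 0)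
        = (Finset.Icc S K).card := by
      rw [Finset.sum_ite_mem, Finset.univ_inter, Finset.card_eq_sum_ones]
    rw [← h3]
    refine Finset.sum_congr rfl fun X _ => ?_
    simp only [h2]
  rw [Finset.sum_congr rfl step1, Finset.sum_comm]
  refine Finset.sum_congr rfl fun X _ => ?_
  rw [← Finset.card_filter]
  have hprod : (Finset.univ.filter (fun fg : (E → A) × (E → B) =>
          IsTension tl hd fg.1 ∧ IsFlow tl hd fg.2 ∧
          ∀ e : E, fg.2 e ≠ 0 → fg.1 e = 0)).filter
        (fun fg => (∀ e ∈ X, fg.1 e = 0) ∧ (∀ e ∉ X, fg.2 e = 0))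
      = (Finset.univ.filter (fun f : E → A => IsTension tl hd f ∧ ∀ e ∈ X, f e = 0)) ×ˢ
        (Finset.univ.filter (fun g : E → B => IsFlow tl hd g ∧ ∀ e ∉ X, g e = 0)) := by
    rw [Finset.filter_filter]
    ext fg
    simp only [Finset.mem_filter, Finset.mem_product, Finset.mem_univ, true_and]
    constructor
    · rintro ⟨⟨hT, hF, hsupp⟩, hKX, hSX⟩
      exact ⟨⟨hT, hKX⟩, ⟨hF, hSX⟩⟩
    · rintro ⟨⟨hT, hKX⟩, hF, hSX⟩
      exact ⟨⟨hT, hF, fun e hne => hKX e (by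
        by_contra hx
        exact hne (hSX e hx))⟩, hKX, hSX⟩
  rw [hprod, Finset.card_product, TF.tension_card, TF.flow_card]
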